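/- Let p be a prime dividing n, ω = e^{2πi/p}, and B_t = {x ∈ {1,ω,...,ω^{p-1}}^n : x_1⋯x_n = ω^t} for 0 ≤ t ≤ p-1. For any degree-compatible term order ≺, every monomial x_1^{u_1}⋯x_n^{u_n} with 0 ≤ u_i ≤ p-1 and u_1+...+u_n < n(p-1)/p is a standard monomial of the vanishing ideal I(B_t) ⊆ ℂ[x_1,...,x_n]. -/

import Mathlib

open MvPolynomial

/-- The set of polynomials vanishing on `S` (the vanishing ideal, as a set). -/
def vanishingOn {σ F : Type*} [CommSemiring F] (S : Set (σ → F)) :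
    Set (MvPolynomial σ F) :=
  {f | ∀ x ∈ S, MvPolynomial.eval x f = 0}

/-- `u` is the leading monomial of `f` with respect to the term order `m`. -/
def IsLeadingMonomial {σ F : Type*} [CommSemiring F] (m : MonomialOrder σ)
    (f : MvPolynomial σ F) (u : σ →₀ ℕ) : Prop :=
  u ∈ f.support ∧ ∀ v ∈ f.support, m.toSyn v ≤ m.toSyn u

/-- `u` is a standard monomial of the vanishing ideal of `S` with respect to `m`. -/
def IsStandard {σ F : Type*} [CommSemiring F] (m : MonomialOrder σ)
    (S : Set (σ → F)) (u : σ →₀ ℕ) : Prop :=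
  ¬ ∃ f ∈ vanishingOn S, IsLeadingMonomial m f u

/-- `m` is a degree-compatible term order. -/
def DegCompatible {σ : Type*} (m : MonomialOrder σ) : Prop :=
  ∀ u v : σ →₀ ℕ, u.degree < v.degree → m.toSyn u < m.toSyn v

private lemma degree_eq_sum_univ {n : ℕ} (u : Fin n →₀ ℕ) :
    u.degree = ∑ i, u i := by
  rw [Finsupp.degree]
  exact Finset.sum_subset (Finset.subset_univ _)
    (fun i _ hi => Finsupp.notMem_support_iff.mp hi)

private lemma key_nat {p n : ℕ} (hp2 : 2 ≤ p) (u v : Fin n → ℕ) (k : ℕ)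
    (hk1 : 1 ≤ k) (hk2 : k ≤ p - 1)
    (hu : ∀ i, u i ≤ p - 1)
    (hcong : ∀ i, v i % p = (u i + k) % p)
    (hdeg : p * (∑ i, u i) < n * (p - 1)) :
    (∑ i, u i) < ∑ i, v i := by
  classical
  set M := Finset.univ.filter (fun i : Fin n => p ≤ u i + k) with hM
  set m := M.card with hm
  have hsplit : ∀ i, (u i + k) % p + (if p ≤ u i + k then p else 0) = u i + k := by
    intro i
    have h1 : u i + k < 2 * p := by have := hu i; omega
    by_cases h : p ≤ u i + k
    · have h2 : (u i + k) % p = u i + k - p := by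
        rw [Nat.mod_eq_sub_mod h]
        exact Nat.mod_eq_of_lt (by omega)
      simp only [h, if_true, h2]; omega
    · simp only [h, if_false, add_zero]
      exact Nat.mod_eq_of_lt (by omega)
  have hsum : (∑ i, (u i + k) % p) + p * m = (∑ i, u i) + n * k := by
    have h1 : ∑ i, ((u i + k) % p + (if p ≤ u i + k then p else 0)) = ∑ i, (u i + k) :=
      Finset.sum_congr rfl (fun i _ => hsplit i)
    rw [Finset.sum_add_distrib] at h1
    have h2 : ∑ i : Fin n, (if p ≤ u i + k then p else 0) = p * m := by
      rw [← Finset.sum_filter, ← hM, Finset.sum_const, smul_eq_mul, ← hm, mul_comm]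
    have h3 : ∑ i : Fin n, (u i + k) = (∑ i, u i) + n * k := by
      rw [Finset.sum_add_distrib]; simp [mul_comm]
    omega
  have hmbound : p * m < n * k := by
    have h1 : m * (p - k) ≤ ∑ i, u i := by
      calc m * (p - k) = ∑ _i ∈ M, (p - k) := by rw [Finset.sum_const, smul_eq_mul]
        _ ≤ ∑ i ∈ M, u i := Finset.sum_le_sum (fun i hi => by
            simp only [hM, Finset.mem_filter] at hi; omega)
        _ ≤ ∑ i, u i := Finset.sum_le_sum_of_subset (Finset.filter_subset _ _)
    have h2 : p - 1 ≤ k * (p - k) := by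
      obtain ⟨a, rfl⟩ := Nat.exists_eq_add_of_le hk1
      set q := p - (1 + a) with hq
      have hq1 : 1 ≤ q := by omega
      obtain ⟨b, hb⟩ := Nat.exists_eq_add_of_le hq1
      have hexp : (1 + a) * (1 + b) = 1 + a + b + a * b := by ring
      rw [hb]
      omega
    have h4 : p * m * (p - k) < n * k * (p - k) := by
      calc p * m * (p - k) = p * (m * (p - k)) := by ring
        _ ≤ p * (∑ i, u i) := Nat.mul_le_mul_left _ h1
        _ < n * (p - 1) := hdeg
        _ ≤ n * (k * (p - k)) := Nat.mul_le_mul_left _ h2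
        _ = n * k * (p - k) := by ring
    exact lt_of_mul_lt_mul_right h4 (Nat.zero_le _)
  have hvle : ∑ i, (u i + k) % p ≤ ∑ i, v i :=
    Finset.sum_le_sum (fun i _ => by rw [← hcong i]; exact Nat.mod_le _ _)
  omega

private lemma eq_of_cong {p n : ℕ} (hp2 : 2 ≤ p) (u v : Fin n → ℕ)
    (hu : ∀ i, u i ≤ p - 1) (hcong : ∀ i, v i % p = u i % p)
    (hdeg : ∑ i, v i ≤ ∑ i, u i) : ∀ i, v i = u i := by
  have hle : ∀ i, u i ≤ v i := by
    intro i
    have h1 := hcong i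
    have h2 := hu i
    have h3 : u i % p = u i := Nat.mod_eq_of_lt (by omega)
    have h4 : v i % p ≤ v i := Nat.mod_le _ _
    omega
  by_contra h
  push_neg at h
  obtain ⟨i, hi⟩ := h
  have : ∑ i, u i < ∑ i, v i :=
    Finset.sum_lt_sum (fun i _ => hle i)
      ⟨i, Finset.mem_univ i, lt_of_le_of_ne (hle i) (Ne.symm hi)⟩
  omega

noncomputable def ee (p : ℕ) (ω : ℂ) (z : ZMod p) : ℂ := ω ^ z.val

private lemma ee_natCast {p : ℕ} {ω : ℂ} (hp : 0 < p) (hω : ω ^ p = 1) (m : ℕ) :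
    ee p ω (m : ZMod p) = ω ^ m := by
  haveI : NeZero p := ⟨hp.ne'⟩
  rw [ee, ZMod.val_natCast]
  conv_rhs => rw [← Nat.div_add_mod m p, pow_add, pow_mul, hω, one_pow, one_mul]

private lemma zmod_cast_val {p : ℕ} (hp : 0 < p) (x : ZMod p) :
    ((x.val : ℕ) : ZMod p) = x := by
  haveI : NeZero p := ⟨hp.ne'⟩
  rw [ZMod.natCast_val, ZMod.cast_id]

private lemma ee_add {p : ℕ} {ω : ℂ} (hp : 0 < p) (hω : ω ^ p = 1) (x y : ZMod p) :
    ee p ω (x + y) = ee p ω x * ee p ω y := by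
  have h : x + y = ((x.val + y.val : ℕ) : ZMod p) := by
    push_cast [zmod_cast_val hp]; ring
  rw [h, ee_natCast hp hω, pow_add]; rfl

private lemma ee_zero {p : ℕ} {ω : ℂ} (hp : 0 < p) (hω : ω ^ p = 1) :
    ee p ω 0 = 1 := by
  have := ee_natCast hp hω 0
  simpa using this

private lemma ee_sum {p : ℕ} {ω : ℂ} (hp : 0 < p) (hω : ω ^ p = 1)
    {ι : Type*} (s : Finset ι) (g : ι → ZMod p) :
    ee p ω (∑ i ∈ s, g i) = ∏ i ∈ s, ee p ω (g i) := by
  classical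
  induction s using Finset.cons_induction with
  | empty => simpa using ee_zero hp hω
  | cons a s ha ih => rw [Finset.sum_cons, Finset.prod_cons, ee_add hp hω, ih]

private lemma ee_one {p : ℕ} {ω : ℂ} (hp2 : 2 ≤ p) :
    ee p ω 1 = ω := by
  haveI : Fact (1 < p) := ⟨hp2⟩
  rw [ee, ZMod.val_one, pow_one]

private lemma char_sum {p : ℕ} {ω : ℂ} [NeZero p] (hp : p.Prime) (hω : ω ^ p = 1)
    (hω1 : ω ≠ 1)
    {n : ℕ} (w : Fin n → ZMod p) (i0 j0 : Fin n) (hne : w i0 ≠ w j0) (T : ZMod p) :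
    ∑ a ∈ Finset.univ.filter (fun a : Fin n → ZMod p => ∑ i, a i = T),
      ee p ω (∑ i, w i * a i) = 0 := by
  haveI : Fact p.Prime := ⟨hp⟩
  have hp0 : 0 < p := hp.pos
  set c : ZMod p := (w i0 - w j0)⁻¹ with hc
  set g : Fin n → ZMod p := fun l => (if l = i0 then c else 0) - (if l = j0 then c else 0)
    with hg
  have hgsum : ∑ l, g l = 0 := by
    simp [hg, Finset.sum_sub_distrib, Finset.sum_ite_eq']
  have hwg : ∑ l, w l * g l = 1 := by
    have h1 : ∑ l, w l * g l = w i0 * c - w j0 * c := by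
      simp only [hg, mul_sub, Finset.sum_sub_distrib, mul_ite, mul_zero,
        Finset.sum_ite_eq', Finset.mem_univ, if_true]
    rw [h1, ← sub_mul, hc, mul_inv_cancel₀ (sub_ne_zero.mpr hne)]
  set S := ∑ a ∈ Finset.univ.filter (fun a : Fin n → ZMod p => ∑ i, a i = T),
      ee p ω (∑ i, w i * a i) with hS
  have key : S = ω * S := by
    rw [hS, Finset.mul_sum]
    refine Finset.sum_equiv (Equiv.subRight g) ?_ ?_
    · intro a
      simp only [Finset.mem_filter, Finset.mem_univ, true_and, Equiv.subRight_apply]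
      have hsub : ∑ i, (a - g) i = (∑ i, a i) - ∑ i, g i := by
        simp [Finset.sum_sub_distrib]
      rw [hsub, hgsum, sub_zero]
    · intro a _
      have h1 : ∑ i, w i * (a - g) i = (∑ i, w i * a i) - 1 := by
        have hpt : ∀ i : Fin n, w i * (a - g) i = w i * a i - w i * g i := fun i => by
          simp [mul_sub]
        rw [Finset.sum_congr rfl (fun i _ => hpt i), Finset.sum_sub_distrib, hwg]
      rw [Equiv.subRight_apply, h1]
      have h2 : ee p ω ((∑ i, w i * a i) - 1 + 1)
          = ee p ω ((∑ i, w i * a i) - 1) * ee p ω 1 := ee_add hp0 hω _ _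
      rw [sub_add_cancel] at h2
      rw [h2, ee_one hp.two_le, mul_comm]
  have h0 : (ω - 1) * S = 0 := by rw [sub_mul, one_mul, ← key, sub_self]
  rcases mul_eq_zero.mp h0 with h | h
  · exact absurd (sub_eq_zero.mp h) hω1
  · exact h

/-- Every monomial with all exponents at most `p-1` and total degree less than `n(p-1)/p`
is a standard monomial of `I(B_t)` for any degree-compatible term order, where `B_t` is the
set of vectors of `p`-th roots of unity with coordinate product `ω^t`. -/
theorem stmt14 (p n t : ℕ) (hp : p.Prime) (hpn : p ∣ n) (hn : 0 < n) (ht : t ≤ p - 1)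
    (m : MonomialOrder (Fin n)) (hm : DegCompatible m)
    (u : Fin n →₀ ℕ) (hu : ∀ i, u i ≤ p - 1)
    (hdeg : p * u.degree < n * (p - 1)) :
    IsStandard m
      {x : Fin n → ℂ | (∀ i, x i ^ p = 1) ∧
        ∏ i, x i = Complex.exp (2 * Real.pi * Complex.I / p) ^ t} u := by
  rintro ⟨f, hfvan, husupp, humax⟩
  haveI : NeZero p := ⟨hp.pos.ne'⟩
  have hp0 : 0 < p := hp.pos
  set ω : ℂ := Complex.exp (2 * Real.pi * Complex.I / p) with hωdef
  have hprim : IsPrimitiveRoot ω p := Complex.isPrimitiveRoot_exp p hp.pos.ne'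
  have hωp : ω ^ p = 1 := hprim.pow_eq_one
  have hω1 : ω ≠ 1 := hprim.ne_one hp.one_lt
  -- all support monomials have degree at most that of u
  have hdegle : ∀ v ∈ f.support, Finsupp.degree v ≤ Finsupp.degree u := by
    intro v hv
    by_contra h
    exact absurd (humax v hv) (not_le.mpr (hm u v (lt_of_not_ge h)))
  classical
  set A : Finset (Fin n → ZMod p) :=
    Finset.univ.filter (fun a : Fin n → ZMod p => ∑ i, a i = (t : ZMod p)) with hA
  set x : (Fin n → ZMod p) → (Fin n → ℂ) := fun a i => ω ^ (a i).val with hx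
  -- evaluation points lie in the variety
  have heval0 : ∀ a ∈ A, MvPolynomial.eval (x a) f = 0 := by
    intro a ha
    refine hfvan (x a) ?_
    constructor
    · intro i
      rw [hx]
      simp only
      rw [← pow_mul, mul_comm, pow_mul, hωp, one_pow]
    · rw [hx]
      simp only
      rw [Finset.prod_pow_eq_pow_sum]
      have h1 : ω ^ (∑ i, (a i).val) = ee p ω ((∑ i, (a i).val : ℕ) : ZMod p) :=
        (ee_natCast hp0 hωp _).symm
      have h2 : ((∑ i, (a i).val : ℕ) : ZMod p) = ∑ i, a i := by
        push_cast [zmod_cast_val hp0]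
        rfl
      have h3 : (∑ i, a i) = (t : ZMod p) := by
        have := Finset.mem_filter.mp (hA ▸ ha)
        exact this.2
      rw [h1, h2, h3, ee_natCast hp0 hωp]
  -- per-monomial evaluation
  have hmono : ∀ (v : Fin n →₀ ℕ) (a : Fin n → ZMod p),
      ∏ i, x a i ^ v i = ee p ω (∑ i, (v i : ZMod p) * a i) := by
    intro v a
    rw [ee_sum hp0 hωp]
    refine Finset.prod_congr rfl (fun i _ => ?_)
    rw [hx]
    simp only
    rw [← pow_mul, ← ee_natCast hp0 hωp]
    congr 1
    push_cast [zmod_cast_val hp0]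
    ring
  have hEval : ∀ a : Fin n → ZMod p, MvPolynomial.eval (x a) f
      = ∑ v ∈ f.support, MvPolynomial.coeff v f * ee p ω (∑ i, (v i : ZMod p) * a i) := by
    intro a
    rw [MvPolynomial.eval_eq']
    exact Finset.sum_congr rfl (fun v _ => by rw [hmono v a])
  -- master sum is zero
  have hS0 : ∑ a ∈ A, ee p ω (-(∑ i, (u i : ZMod p) * a i)) * MvPolynomial.eval (x a) f
      = 0 :=
    Finset.sum_eq_zero (fun a ha => by rw [heval0 a ha, mul_zero])
  -- rearrange the master sum
  have hswap : ∑ a ∈ A, ee p ω (-(∑ i, (u i : ZMod p) * a i)) * MvPolynomial.eval (x a) f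
      = ∑ v ∈ f.support, MvPolynomial.coeff v f *
          ∑ a ∈ A, ee p ω (∑ i, ((v i : ZMod p) - u i) * a i) := by
    have step1 : ∀ a : Fin n → ZMod p,
        ee p ω (-(∑ i, (u i : ZMod p) * a i)) * MvPolynomial.eval (x a) f
        = ∑ v ∈ f.support, MvPolynomial.coeff v f *
            ee p ω (∑ i, ((v i : ZMod p) - u i) * a i) := by
      intro a
      rw [hEval a, Finset.mul_sum]
      refine Finset.sum_congr rfl (fun v _ => ?_)
      have h1 : (∑ i, ((v i : ZMod p) - u i) * a i)
          = (∑ i, (v i : ZMod p) * a i) + (-(∑ i, (u i : ZMod p) * a i)) := by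
        rw [← sub_eq_add_neg, ← Finset.sum_sub_distrib]
        exact Finset.sum_congr rfl (fun i _ => by rw [sub_mul])
      rw [h1, ee_add hp0 hωp]
      ring
    rw [Finset.sum_congr rfl (fun a _ => step1 a), Finset.sum_comm]
    exact Finset.sum_congr rfl (fun v _ => (Finset.mul_sum _ _ _).symm)
  -- inner sums vanish except at v = u
  have hzero : ∀ v ∈ f.support, v ≠ u →
      (∑ a ∈ A, ee p ω (∑ i, ((v i : ZMod p) - u i) * a i)) = 0 := by
    intro v hv hvu
    set w : Fin n → ZMod p := fun i => (v i : ZMod p) - u i with hw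
    have hnc : ∃ i j, w i ≠ w j := by
      by_contra hcon
      push_neg at hcon
      set i0 : Fin n := ⟨0, hn⟩ with hi0
      set k : ZMod p := w i0 with hk
      have hkdef : k = (v i0 : ZMod p) - (u i0 : ZMod p) := rfl
      have hki : ∀ i, (v i : ZMod p) = (u i : ZMod p) + k := by
        intro i
        have h := hcon i i0
        simp only [hw] at h
        rw [hkdef]
        linear_combination h
      have hle : ∑ i, v i ≤ ∑ i, u i := by
        have := hdegle v hv
        rwa [degree_eq_sum_univ, degree_eq_sum_univ] at this
      by_cases hk0 : k = 0
      · have hcong : ∀ i, (v i : ℕ) % p = u i % p := by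
          intro i
          have h := hki i
          rw [hk0, add_zero] at h
          exact (ZMod.natCast_eq_natCast_iff' _ _ _).mp h
        have heq : ∀ i, v i = u i :=
          eq_of_cong hp.two_le (fun i => u i) (fun i => v i) hu hcong hle
        exact hvu (Finsupp.ext heq)
      · set k' := k.val with hk'
        have hk1 : 1 ≤ k' := by
          rcases Nat.eq_zero_or_pos k' with h | h
          · have hv0 : k.val = 0 := by omega
            exact absurd ((ZMod.val_eq_zero k).mp hv0) hk0
          · exact h
        have hk2 : k' ≤ p - 1 := by
          have := ZMod.val_lt k
          omega
        have hcong : ∀ i, (v i : ℕ) % p = (u i + k') % p := by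
          intro i
          have h1 := hki i
          have h2 : ((u i + k' : ℕ) : ZMod p) = (u i : ZMod p) + k := by
            push_cast [hk', zmod_cast_val hp0]
            ring
          rw [← h2] at h1
          exact (ZMod.natCast_eq_natCast_iff' _ _ _).mp h1
        have hkey := key_nat hp.two_le (fun i => u i) (fun i => v i) k' hk1 hk2 hu hcong
            (by rwa [degree_eq_sum_univ] at hdeg)
        omega
    obtain ⟨i1, j1, hne⟩ := hnc
    have := char_sum hp hωp hω1 w i1 j1 hne (t : ZMod p)
    rw [hA]
    exact this
  -- conclude
  have hcard : ((A.card : ℕ) : ℂ) ≠ 0 := by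
    have hne : A.Nonempty := by
      refine ⟨fun i => if i = (⟨0, hn⟩ : Fin n) then (t : ZMod p) else 0, ?_⟩
      rw [hA]
      simp [Finset.sum_ite_eq']
    exact Nat.cast_ne_zero.mpr (Finset.card_pos.mpr hne).ne'
  have hfinal : MvPolynomial.coeff u f * ((A.card : ℕ) : ℂ) = 0 := by
    have h1 := hS0
    rw [hswap] at h1
    rw [Finset.sum_eq_single_of_mem u husupp
      (fun v hv hvu => by rw [hzero v hv hvu, mul_zero])] at h1
    have h2 : ∑ a ∈ A, ee p ω (∑ i, ((u i : ZMod p) - u i) * a i) = ((A.card : ℕ) : ℂ) := by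
      rw [Finset.sum_congr rfl (fun a (_ : a ∈ A) => by
        rw [show (∑ i, ((u i : ZMod p) - u i) * a i) = 0 from by simp,
          ee_zero hp0 hωp])]
      simp
    rw [h2] at h1
    exact h1
  have hcu : MvPolynomial.coeff u f ≠ 0 := MvPolynomial.mem_support_iff.mp husupp
  rcases mul_eq_zero.mp hfinal with h | h
  · exact hcu h
  · exact hcard h
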